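/- Let s ≥ 2, a ≥ 2, q = a·C(s,2) - 1, and n ≥ s. If G is a multigraph on [n] in which every s-element vertex set spans total edge multiplicity at most q, then the sum of all edge multiplicities of G is at most (a-1)·C(n,2) + t_{s-1}(n), where t_{s-1}(n) is the number of edges of the Turán graph T_{s-1}(n). Moreover this bound is attained. -/

import Mathlib

open Finset

def pairs (n : ℕ) (X : Finset (Fin n)) : Finset (Fin n × Fin n) :=
  (X ×ˢ X).filter (fun p => p.1 < p.2)

def mgS (n : ℕ) (w : Fin n → Fin n → ℕ) (X : Finset (Fin n)) : ℕ :=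
  ∑ p ∈ pairs n X, w p.1 p.2

def mgP (n : ℕ) (w : Fin n → Fin n → ℕ) (X : Finset (Fin n)) : ℕ :=
  ∏ p ∈ pairs n X, w p.1 p.2

def IsNSQ (n s q : ℕ) (w : Fin n → Fin n → ℕ) : Prop :=
  ∀ X : Finset (Fin n), X.card = s → mgS n w X ≤ q

noncomputable def tEdges (r n : ℕ) : ℕ := Nat.card (SimpleGraph.turanGraph n r).edgeSet

variable {n : ℕ} {w : Fin n → Fin n → ℕ}

lemma pairs_eq (X : Finset (Fin n)) :
    pairs n X = X.offDiag.filter (fun p => p.1 < p.2) := by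
  ext p
  simp only [pairs, mem_filter, mem_product, mem_offDiag]
  exact ⟨fun ⟨⟨h1, h2⟩, h3⟩ => ⟨⟨h1, h2, h3.ne⟩, h3⟩, fun ⟨⟨h1, h2, _⟩, h3⟩ => ⟨⟨h1, h2⟩, h3⟩⟩

lemma offDiag_sum (hw : ∀ i j, w i j = w j i) (X : Finset (Fin n)) :
    ∑ p ∈ X.offDiag, w p.1 p.2 = 2 * mgS n w X := by
  rw [two_mul, mgS, pairs_eq,
    ← Finset.sum_filter_add_sum_filter_not X.offDiag (fun p => p.1 < p.2)]
  congr 1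
  refine Finset.sum_nbij' (i := Prod.swap) (j := Prod.swap) ?_ ?_ ?_ ?_ ?_
  · intro p hp
    simp only [mem_filter, mem_offDiag, not_lt] at hp ⊢
    exact ⟨⟨hp.1.2.1, hp.1.1, hp.1.2.2.symm⟩, lt_of_le_of_ne hp.2 hp.1.2.2.symm⟩
  · intro p hp
    simp only [mem_filter, mem_offDiag, not_lt] at hp ⊢
    exact ⟨⟨hp.1.2.1, hp.1.1, hp.1.2.2.symm⟩, hp.2.le⟩
  · intro p _; rfl
  · intro p _; rfl
  · intro p _; exact hw p.1 p.2

lemma mgS_erase (hw : ∀ i j, w i j = w j i) {X : Finset (Fin n)} {v : Fin n} (hv : v ∈ X) :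
    mgS n w X = mgS n w (X.erase v) + ∑ u ∈ X.erase v, w u v := by
  have hins : insert v (X.erase v) = X := Finset.insert_erase hv
  have hnm : v ∉ X.erase v := Finset.notMem_erase v X
  have hoff : X.offDiag = (X.erase v).offDiag ∪ {v} ×ˢ (X.erase v) ∪ (X.erase v) ×ˢ {v} := by
    conv_lhs => rw [← hins]
    exact Finset.offDiag_insert (s := X.erase v) (a := v) hnm
  have hd1 : Disjoint ((X.erase v).offDiag ∪ {v} ×ˢ (X.erase v)) ((X.erase v) ×ˢ {v}) := by
    rw [Finset.disjoint_left]
    intro p hp hp2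
    simp only [mem_union, mem_offDiag, mem_product, mem_singleton] at hp hp2
    rcases hp with h | h
    · exact Finset.notMem_erase v X (hp2.2 ▸ h.2.1)
    · exact Finset.notMem_erase v X (h.1 ▸ hp2.1)
  have hd2 : Disjoint ((X.erase v).offDiag) ({v} ×ˢ (X.erase v)) := by
    rw [Finset.disjoint_left]
    intro p hp hp2
    simp only [mem_offDiag, mem_product, mem_singleton] at hp hp2
    exact Finset.notMem_erase v X (hp2.1 ▸ hp.1)
  have key : ∑ p ∈ X.offDiag, w p.1 p.2
      = ∑ p ∈ (X.erase v).offDiag, w p.1 p.2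
        + (∑ u ∈ X.erase v, w v u + ∑ u ∈ X.erase v, w u v) := by
    rw [hoff, Finset.sum_union hd1, Finset.sum_union hd2, add_assoc]
    congr 2
    · rw [Finset.sum_product]; simp
    · rw [Finset.sum_product]; simp
  have key2 : ∑ u ∈ X.erase v, w v u = ∑ u ∈ X.erase v, w u v :=
    Finset.sum_congr rfl fun u _ => hw v u
  rw [offDiag_sum hw, offDiag_sum hw, key2] at key
  omega

lemma double_sum_erase (hw : ∀ i j, w i j = w j i) (Y : Finset (Fin n)) :
    ∑ y ∈ Y, ∑ z ∈ Y.erase y, w z y = 2 * mgS n w Y := by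
  rw [← offDiag_sum hw]
  have h1 : Y.offDiag = (Y ×ˢ Y).filter (fun p => p.1 ≠ p.2) := by
    ext p; simp [Finset.mem_offDiag, and_assoc]
  rw [h1, Finset.sum_filter, Finset.sum_product, Finset.sum_comm]
  refine Finset.sum_congr rfl fun y _ => ?_
  rw [← Finset.sum_filter, Finset.filter_ne' Y y]

lemma two_mul_choose_two (m : ℕ) : 2 * m.choose 2 = m * (m - 1) := by
  induction m with
  | zero => rfl
  | succ t ih =>
    rw [Nat.choose_succ_succ t 1, Nat.mul_add, ih, Nat.choose_one_right]
    cases t with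
    | zero => rfl
    | succ u => simp only [Nat.add_sub_cancel]; ring

lemma card_pairs (X : Finset (Fin n)) : (pairs n X).card = X.card.choose 2 := by
  have hsplit := Finset.card_filter_add_card_filter_not
    (s := X.offDiag) (p := fun p => p.1 < p.2)
  have hswap : (X.offDiag.filter (fun p => ¬ p.1 < p.2)).card
      = (X.offDiag.filter (fun p => p.1 < p.2)).card := by
    refine Finset.card_nbij' (i := Prod.swap) (j := Prod.swap) ?_ ?_ ?_ ?_
    · intro p hp
      simp only [mem_coe, mem_filter, mem_offDiag, not_lt] at hp ⊢
      exact ⟨⟨hp.1.2.1, hp.1.1, hp.1.2.2.symm⟩, lt_of_le_of_ne hp.2 hp.1.2.2.symm⟩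
    · intro p hp
      simp only [mem_coe, mem_filter, mem_offDiag, not_lt] at hp ⊢
      exact ⟨⟨hp.1.2.1, hp.1.1, hp.1.2.2.symm⟩, hp.2.le⟩
    · intro p _; rfl
    · intro p _; rfl
  have hoff := Finset.offDiag_card X
  have h2 : 2 * (pairs n X).card = X.card * X.card - X.card := by
    rw [pairs_eq]; omega
  have h3 := two_mul_choose_two X.card
  have h4 : X.card * X.card - X.card = X.card * (X.card - 1) := by
    cases h : X.card with
    | zero => rfl
    | succ u => rw [Nat.add_sub_cancel, Nat.mul_succ]; omega
  omega

def tc (r : ℕ) : ℕ → ℕ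
  | 0 => 0
  | m+1 => tc r m + (m - m / r)

lemma tc_le (r : ℕ) : ∀ j, j ≤ r → tc r j = j.choose 2 := by
  intro j
  induction j with
  | zero => intro _; rfl
  | succ u ih =>
    intro hu
    have h1 : u / r = 0 := Nat.div_eq_of_lt (by omega)
    rw [tc, ih (by omega), h1, Nat.choose_succ_succ u 1, Nat.choose_one_right]
    simp only [Nat.succ_eq_add_one, Nat.reduceAdd]
    omega

lemma tc_succ_r (r : ℕ) (hr : 1 ≤ r) : tc r (r+1) = (r+1).choose 2 - 1 := by
  rw [tc, tc_le r r le_rfl, Nat.div_self hr, Nat.choose_succ_succ r 1, Nat.choose_one_right]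
  simp only [Nat.succ_eq_add_one, Nat.reduceAdd]
  omega

lemma count_mod (r j : ℕ) : #((range j).filter (fun i => i % r = j % r)) = j / r := by
  rw [← Nat.Ioc_filter_dvd_card_eq_div j r]
  refine Finset.card_nbij' (i := fun x => j - x) (j := fun x => j - x) ?_ ?_ ?_ ?_
  · intro x hx
    simp only [mem_coe, mem_filter, mem_range, mem_Ioc] at hx ⊢
    refine ⟨⟨by omega, by omega⟩, ?_⟩
    exact (Nat.modEq_iff_dvd' (by omega)).mp hx.2
  · intro x hx
    simp only [mem_coe, mem_filter, mem_range, mem_Ioc] at hx ⊢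
    have hd : r ∣ j - (j - x) := by
      rw [Nat.sub_sub_self hx.1.2]; exact hx.2
    exact ⟨by omega, (Nat.modEq_iff_dvd' (by omega)).mpr hd⟩
  · intro x hx
    simp only [mem_coe, mem_filter, mem_range] at hx
    show j - (j - x) = x
    omega
  · intro x hx
    simp only [mem_coe, mem_filter, mem_Ioc] at hx
    show j - (j - x) = x
    omega

lemma fin_count {n : ℕ} (r : ℕ) (jf : Fin n) :
    #(univ.filter (fun i : Fin n => i < jf ∧ ¬ (i:ℕ) % r = (jf:ℕ) % r))
      = (jf:ℕ) - (jf:ℕ) / r := by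
  have hIio : #(univ.filter (fun i : Fin n => i < jf)) = (jf:ℕ) := by
    have : univ.filter (fun i : Fin n => i < jf) = Finset.Iio jf := by
      ext i; simp
    rw [this, Fin.card_Iio]
  have hsplit := Finset.card_filter_add_card_filter_not
    (s := univ.filter (fun i : Fin n => i < jf)) (p := fun i => (i:ℕ) % r = (jf:ℕ) % r)
  rw [Finset.filter_filter, Finset.filter_filter] at hsplit
  have heq : #(univ.filter (fun i : Fin n => i < jf ∧ (i:ℕ) % r = (jf:ℕ) % r))
      = (jf:ℕ) / r := by
    rw [← count_mod r (jf:ℕ)]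
    have himg : (univ.filter (fun i : Fin n => i < jf ∧ (i:ℕ) % r = (jf:ℕ) % r)).image
        (fun i : Fin n => (i:ℕ))
        = (range (jf:ℕ)).filter (fun i => i % r = (jf:ℕ) % r) := by
      ext m
      simp only [Finset.mem_image, mem_filter, mem_univ, true_and, mem_range, Fin.lt_def]
      constructor
      · rintro ⟨i, ⟨h1, h2⟩, rfl⟩; exact ⟨h1, h2⟩
      · rintro ⟨h1, h2⟩
        exact ⟨⟨m, lt_trans h1 jf.isLt⟩, ⟨h1, h2⟩, rfl⟩
    rw [← himg, Finset.card_image_of_injective _ Fin.val_injective]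
  omega

lemma sum_fin_tc (r : ℕ) : ∀ n, (∑ j : Fin n, ((j:ℕ) - (j:ℕ) / r)) = tc r n := by
  intro n
  induction n with
  | zero => rfl
  | succ m ih =>
    rw [Fin.sum_univ_castSucc]
    simp only [Fin.coe_castSucc, Fin.val_last]
    rw [ih, tc]

lemma card_pairs_filter (r n : ℕ) :
    #((pairs n univ).filter (fun p => ¬ (p.1:ℕ) % r = (p.2:ℕ) % r)) = tc r n := by
  rw [Finset.card_eq_sum_card_fiberwise
    (f := Prod.snd) (t := univ) (fun x _ => Finset.mem_univ _), ← sum_fin_tc r n]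
  refine Finset.sum_congr rfl fun j _ => ?_
  rw [← fin_count r j]
  have himg : (((pairs n univ).filter (fun p => ¬ (p.1:ℕ) % r = (p.2:ℕ) % r)).filter
      (fun p => p.2 = j)).image Prod.fst
      = univ.filter (fun i : Fin n => i < j ∧ ¬ (i:ℕ) % r = (j:ℕ) % r) := by
    ext i
    simp only [Finset.mem_image, mem_filter, mem_univ, true_and]
    constructor
    · rintro ⟨p, ⟨⟨hpair, hmod⟩, h2⟩, rfl⟩
      have hlt : p.1 < p.2 := (Finset.mem_filter.mp hpair).2
      rw [h2] at hlt hmod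
      exact ⟨hlt, hmod⟩
    · rintro ⟨h1, h2⟩
      refine ⟨(i, j), ⟨⟨?_, h2⟩, rfl⟩, rfl⟩
      refine Finset.mem_filter.mpr ⟨Finset.mem_product.mpr ⟨mem_univ _, mem_univ _⟩, h1⟩
  rw [← himg]
  rw [Finset.card_image_of_injOn]
  intro p hp q hq hpq
  rw [Finset.mem_coe, Finset.mem_filter] at hp hq
  exact Prod.ext hpq (hp.2.trans hq.2.symm)

lemma tEdges_eq_tc (r n : ℕ) : tEdges r n = tc r n := by
  rw [← card_pairs_filter r n]
  have h1 : tEdges r n = (SimpleGraph.turanGraph n r).edgeFinset.card := by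
    rw [tEdges, Nat.card_eq_card_toFinset]
    rfl
  rw [h1]
  refine (Finset.card_bij (fun p _ => Sym2.mk p.1 p.2) ?_ ?_ ?_).symm
  · intro p hp
    simp only [mem_filter, pairs, mem_product] at hp
    rw [SimpleGraph.mem_edgeFinset, SimpleGraph.mem_edgeSet]
    exact hp.2
  · intro p hp q hq hpq
    simp only [mem_filter, pairs, mem_product] at hp hq
    rw [Sym2.mk_eq_mk_iff] at hpq
    rcases hpq with h | h
    · exact h
    · exfalso
      have h1 : p.1 = q.2 := by rw [h]; rfl
      have h2 : p.2 = q.1 := by rw [h]; rfl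
      rw [h1, h2] at hp
      exact absurd hq.1.2 (asymm hp.1.2)
  · intro e he
    induction e with
    | _ x y =>
      rw [SimpleGraph.mem_edgeFinset, SimpleGraph.mem_edgeSet] at he
      have hne : x ≠ y := he.ne
      rcases lt_or_gt_of_ne hne with h | h
      · refine ⟨(x, y), ?_, rfl⟩
        simp only [mem_filter, pairs, mem_product]
        exact ⟨⟨⟨mem_univ _, mem_univ _⟩, h⟩, he⟩
      · refine ⟨(y, x), ?_, Sym2.eq_swap⟩
        simp only [mem_filter, pairs, mem_product]
        exact ⟨⟨⟨mem_univ _, mem_univ _⟩, h⟩, fun hc => he hc.symm⟩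

lemma main_ub (s a : ℕ) {n : ℕ} (hs : 2 ≤ s) (ha : 2 ≤ a)
    (w : Fin n → Fin n → ℕ) (hw : ∀ i j, w i j = w j i)
    (hnsq : IsNSQ n s (a * Nat.choose s 2 - 1) w) :
    ∀ m : ℕ, s ≤ m → ∀ V : Finset (Fin n), V.card = m →
      mgS n w V ≤ (a - 1) * m.choose 2 + tc (s-1) m := by
  have hC1 : 1 ≤ s.choose 2 := Nat.choose_pos hs
  have hmulC : (a-1) * s.choose 2 + s.choose 2 = a * s.choose 2 := by
    obtain ⟨b, rfl⟩ : ∃ b, a = b + 1 := ⟨a - 1, by omega⟩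
    rw [Nat.add_sub_cancel, Nat.succ_mul]
  intro m hm
  induction m, hm using Nat.le_induction with
  | base =>
    intro V hV
    have h := hnsq V hV
    have htc : tc (s-1) s = s.choose 2 - 1 := by
      have h1 := tc_succ_r (s-1) (by omega)
      rw [(by omega : s - 1 + 1 = s)] at h1
      exact h1
    rw [htc]
    omega
  | succ m hm ih =>
    intro V hV
    -- choose a max-weight (s-1)-set
    have hPne : (V.powersetCard (s-1)).Nonempty :=
      Finset.powersetCard_nonempty.mpr (by omega)
    obtain ⟨Y, hYmem, hYmax⟩ := Finset.exists_max_image (V.powersetCard (s-1)) (mgS n w) hPne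
    obtain ⟨hYV, hYcard⟩ := Finset.mem_powersetCard.mp hYmem
    set q := a * Nat.choose s 2 - 1 with hqdef
    set I := mgS n w Y with hIdef
    set T := a * (s-1) - 1 with hTdef
    set B := a * (s-1) * (s-2) with hBdef
    set D : Fin n → ℕ := fun u => ∑ y ∈ Y, w u y with hDdef
    set k := (V \ Y).card with hkdef
    set SD := ∑ u ∈ V \ Y, D u with hSDdef
    have hk : k = m + 1 - (s - 1) := by rw [hkdef, Finset.card_sdiff_of_subset hYV, hYcard, hV]
    have hk2 : 2 ≤ k := by omega
    have hT1 : T + 1 = a * (s-1) := by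
      have : 1 * 1 ≤ a * (s-1) := Nat.mul_le_mul (by omega) (by omega)
      omega
    have hq1 : q + 1 = a * s.choose 2 := by
      have : 1 * 1 ≤ a * s.choose 2 := Nat.mul_le_mul (by omega) (by omega)
      omega
    have h2C : 2 * s.choose 2 = s * (s-1) := two_mul_choose_two s
    have hss : s * (s-1) = (s-1)*(s-2) + 2*(s-1) := by
      have h1 : (s-1)*(s-2) + 2*(s-1) = (s-1)*((s-2)+2) := by ring
      rw [h1, (by omega : s - 2 + 2 = s), mul_comm]
    have h2q : 2 * q = B + 2 * T := by
      have e1 : a * (s * (s-1)) = B + 2 * (a * (s-1)) := by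
        rw [hss, hBdef]; ring
      have e2 : 2 * (q+1) = a * (2 * s.choose 2) := by rw [hq1]; ring
      rw [h2C] at e2
      omega
    -- step 1 : I + D u ≤ q
    have step1 : ∀ u ∈ V \ Y, I + D u ≤ q := by
      intro u hu
      obtain ⟨huV, huY⟩ := Finset.mem_sdiff.mp hu
      have hXcard : (insert u Y).card = s := by
        rw [Finset.card_insert_of_notMem huY, hYcard]; omega
      have h := hnsq (insert u Y) hXcard
      have hrw : mgS n w (insert u Y) = I + ∑ y ∈ Y, w y u := by
        have h2 := mgS_erase hw (X := insert u Y) (v := u) (Finset.mem_insert_self u Y)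
        rw [Finset.erase_insert huY] at h2
        exact h2
      have hsym : ∑ y ∈ Y, w y u = D u := Finset.sum_congr rfl fun y _ => hw y u
      rw [hrw, hsym] at h
      exact h
    -- step 2 : (s-2) * D u ≤ 2 * I
    have step2 : ∀ u ∈ V \ Y, (s-2) * D u ≤ 2 * I := by
      intro u hu
      obtain ⟨huV, huY⟩ := Finset.mem_sdiff.mp hu
      have hy : ∀ y ∈ Y, D u ≤ w u y + ∑ z ∈ Y.erase y, w z y := by
        intro y hyY
        have huEY : u ∉ Y.erase y := fun hc => huY (Finset.erase_subset _ _ hc)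
        have hZmem : insert u (Y.erase y) ∈ V.powersetCard (s-1) := by
          refine Finset.mem_powersetCard.mpr ⟨?_, ?_⟩
          · exact Finset.insert_subset huV ((Finset.erase_subset _ _).trans hYV)
          · rw [Finset.card_insert_of_notMem huEY, Finset.card_erase_of_mem hyY, hYcard]
            omega
        have hle := hYmax _ hZmem
        have e1 : I = mgS n w (Y.erase y) + ∑ z ∈ Y.erase y, w z y := mgS_erase hw hyY
        have e2 : mgS n w (insert u (Y.erase y))
            = mgS n w (Y.erase y) + ∑ z ∈ Y.erase y, w z u := by
          have h2 := mgS_erase hw (X := insert u (Y.erase y)) (v := u)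
            (Finset.mem_insert_self _ _)
          rw [Finset.erase_insert huEY] at h2
          exact h2
        have e4 : w u y + ∑ z ∈ Y.erase y, w u z = D u := Finset.add_sum_erase Y (w u) hyY
        have e5 : ∑ z ∈ Y.erase y, w u z = ∑ z ∈ Y.erase y, w z u :=
          Finset.sum_congr rfl fun z _ => hw u z
        rw [e2] at hle
        omega
      have hsum : Y.card * D u ≤ D u + 2 * I := by
        calc Y.card * D u = ∑ _y ∈ Y, D u := by rw [Finset.sum_const, smul_eq_mul]
          _ ≤ ∑ y ∈ Y, (w u y + ∑ z ∈ Y.erase y, w z y) := Finset.sum_le_sum hy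
          _ = ∑ y ∈ Y, w u y + ∑ y ∈ Y, ∑ z ∈ Y.erase y, w z y := Finset.sum_add_distrib
          _ = D u + 2 * I := by rw [double_sum_erase hw Y]
      have hsplitmul : Y.card * D u = (s-2) * D u + D u := by
        rw [hYcard, (by omega : s - 1 = (s-2) + 1), Nat.succ_mul]
      omega
    -- key inequality
    have key : 2 * I + SD ≤ B + k * T := by
      by_cases hcase : B ≤ 2 * I
      · have hsum1 : k * I + SD ≤ k * q := by
          have h1 : ∑ u ∈ V \ Y, (I + D u) ≤ ∑ _u ∈ V \ Y, q := Finset.sum_le_sum step1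
          rw [Finset.sum_add_distrib, Finset.sum_const, smul_eq_mul, Finset.sum_const,
            smul_eq_mul] at h1
          exact h1
        have m1 : 2 * (k * I) + 2 * SD ≤ k * B + 2 * (k * T) := by
          calc 2 * (k * I) + 2 * SD = 2 * (k * I + SD) := by ring
            _ ≤ 2 * (k * q) := by omega
            _ = k * (2 * q) := by ring
            _ = k * (B + 2 * T) := by rw [h2q]
            _ = k * B + 2 * (k * T) := by ring
        have m2 : (k-2) * B ≤ (k-2) * (2 * I) := Nat.mul_le_mul_left _ hcase
        have m3 : k * B = (k-2) * B + 2 * B := by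
          rw [← Nat.add_mul, (by omega : k - 2 + 2 = k)]
        have m4 : (k-2) * (2 * I) + 2 * (2 * I) = k * (2 * I) := by
          rw [← Nat.add_mul, (by omega : k - 2 + 2 = k)]
        have m5 : k * (2 * I) = 2 * (k * I) := by ring
        omega
      · push_neg at hcase
        have hs2 : 1 ≤ s - 2 := by
          by_contra hc
          rw [hBdef, (by omega : s - 2 = 0), Nat.mul_zero] at hcase
          omega
        have hBc : B = (s-2) * (a * (s-1)) := by rw [hBdef]; ring
        have hDT : ∀ u ∈ V \ Y, D u ≤ T := by
          intro u hu
          have h1 := step2 u hu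
          have h2 : (s-2) * D u < (s-2) * (a * (s-1)) := by omega
          have h3 := Nat.lt_of_mul_lt_mul_left h2
          omega
        have hSD : SD ≤ k * T := by
          rw [hSDdef, hkdef]
          calc ∑ u ∈ V \ Y, D u ≤ ∑ _u ∈ V \ Y, T := Finset.sum_le_sum hDT
            _ = (V \ Y).card * T := by rw [Finset.sum_const, smul_eq_mul]
        omega
    -- sum of weighted degrees over Y
    have hW : ∑ y ∈ Y, (∑ u ∈ V.erase y, w u y) = 2 * I + SD := by
      have hWele : ∀ y ∈ Y, V.erase y = (Y.erase y) ∪ (V \ Y) := by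
        intro y hyY
        ext u
        simp only [Finset.mem_erase, Finset.mem_union, Finset.mem_sdiff]
        have h1 : u ∈ Y → u ∈ V := fun h => hYV h
        have h2 : u = y → u ∈ Y := fun h => h ▸ hyY
        constructor
        · rintro ⟨hne, huV⟩
          by_cases hY : u ∈ Y
          · exact Or.inl ⟨hne, hY⟩
          · exact Or.inr ⟨huV, hY⟩
        · rintro (⟨hne, hY⟩ | ⟨huV, hY⟩)
          · exact ⟨hne, h1 hY⟩
          · exact ⟨fun hc => hY (h2 hc), huV⟩
      have hdisj : ∀ y : Fin n, Disjoint (Y.erase y) (V \ Y) :=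
        fun y => Finset.disjoint_sdiff.mono_left (Finset.erase_subset y Y)
      calc ∑ y ∈ Y, (∑ u ∈ V.erase y, w u y)
          = ∑ y ∈ Y, (∑ z ∈ Y.erase y, w z y + ∑ u ∈ V \ Y, w u y) := by
            refine Finset.sum_congr rfl fun y hyY => ?_
            rw [hWele y hyY, Finset.sum_union (hdisj y)]
        _ = 2 * I + ∑ y ∈ Y, ∑ u ∈ V \ Y, w u y := by
            rw [Finset.sum_add_distrib, double_sum_erase hw Y]
        _ = 2 * I + SD := by rw [Finset.sum_comm]
    -- find a low-degree vertex in Y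
    set f := m / (s-1) with hfdef
    have hfm : f * (s-1) ≤ m := Nat.div_mul_le_self m (s-1)
    have hfle : f ≤ m := Nat.div_le_self m (s-1)
    set g := m - f with hgdef
    set t := (a-1) * m + g with htdef
    have hcon : B + k * T < (s-1) * (t+1) := by
      have hkm : (s-2) + k = m := by omega
      have e1 : B + (k * T + k) = a * (s-1) * m := by
        calc B + (k * T + k) = B + k * (T + 1) := by ring
          _ = B + k * (a * (s-1)) := by rw [hT1]
          _ = a * (s-1) * ((s-2) + k) := by rw [hBdef]; ring
          _ = a * (s-1) * m := by rw [hkm]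
      have ham : (a-1) * m + m = a * m := by
        obtain ⟨b, rfl⟩ : ∃ b, a = b + 1 := ⟨a - 1, by omega⟩
        rw [Nat.add_sub_cancel, Nat.succ_mul]
      have e2 : (s-1) * ((a-1) * m) + (s-1) * m = a * (s-1) * m := by
        calc (s-1) * ((a-1) * m) + (s-1) * m = (s-1) * ((a-1) * m + m) := by ring
          _ = (s-1) * (a * m) := by rw [ham]
          _ = a * (s-1) * m := by ring
      have e3 : (s-1) * m = (s-1) * f + (s-1) * g := by
        rw [← Nat.mul_add, (by omega : f + g = m)]
      have e4 : (s-1) * (t + 1) = (s-1) * ((a-1) * m) + (s-1) * g + (s-1) := by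
        rw [htdef]; ring
      have e5 : (s-1) * f ≤ m := by rw [mul_comm]; exact hfm
      omega
    have hex : ∃ y ∈ Y, ∑ u ∈ V.erase y, w u y ≤ t := by
      by_contra hc
      push_neg at hc
      have h1 : ∑ _y ∈ Y, (t+1) ≤ ∑ y ∈ Y, (∑ u ∈ V.erase y, w u y) :=
        Finset.sum_le_sum fun y hy => hc y hy
      rw [Finset.sum_const, smul_eq_mul, hYcard, hW] at h1
      omega
    obtain ⟨y, hyY, hWy⟩ := hex
    -- conclude by induction
    have hVe : (V.erase y).card = m := by
      rw [Finset.card_erase_of_mem (hYV hyY), hV]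
      omega
    have hih := ih (V.erase y) hVe
    have hsplit : mgS n w V = mgS n w (V.erase y) + ∑ u ∈ V.erase y, w u y :=
      mgS_erase hw (hYV hyY)
    have hch : (m+1).choose 2 = m.choose 2 + m := by
      rw [Nat.choose_succ_succ m 1, Nat.choose_one_right]
      simp only [Nat.succ_eq_add_one, Nat.reduceAdd]
      omega
    have htcsucc : tc (s-1) (m+1) = tc (s-1) m + (m - m/(s-1)) := rfl
    have hmul : (a-1) * (m.choose 2) + (a-1) * m = (a-1) * ((m+1).choose 2) := by
      rw [hch, Nat.mul_add]
    have h2 := add_le_add hih hWy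
    rw [hsplit, htcsucc, ← hfdef, ← hgdef]
    calc mgS n w (V.erase y) + ∑ u ∈ V.erase y, w u y
        ≤ ((a-1) * m.choose 2 + tc (s-1) m) + t := h2
      _ = ((a-1) * m.choose 2 + (a-1) * m) + (tc (s-1) m + g) := by rw [htdef]; ring
      _ = (a-1) * ((m+1).choose 2) + (tc (s-1) m + g) := by rw [hmul]

lemma mgS_split (n r c : ℕ) (X : Finset (Fin n)) :
    mgS n (fun i j => c + (if (i:ℕ) % r = (j:ℕ) % r then 0 else 1)) X
      = c * (pairs n X).card
        + #((pairs n X).filter (fun p => ¬ (p.1:ℕ) % r = (p.2:ℕ) % r)) := by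
  rw [mgS, Finset.sum_add_distrib, Finset.sum_const, smul_eq_mul, mul_comm]
  congr 1
  rw [Finset.card_filter]
  refine Finset.sum_congr rfl fun p _ => ?_
  by_cases h : (p.1:ℕ) % r = (p.2:ℕ) % r <;> simp [h]

theorem bondy_tuza_sum' (s a n : ℕ) (hs : 2 ≤ s) (ha : 2 ≤ a) (hn : s ≤ n) :
    (∀ w : Fin n → Fin n → ℕ, (∀ i j, w i j = w j i) →
        IsNSQ n s (a * Nat.choose s 2 - 1) w →
        mgS n w Finset.univ ≤ (a - 1) * Nat.choose n 2 + tEdges (s - 1) n) ∧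
    (∃ w : Fin n → Fin n → ℕ, (∀ i j, w i j = w j i) ∧
        IsNSQ n s (a * Nat.choose s 2 - 1) w ∧
        mgS n w Finset.univ = (a - 1) * Nat.choose n 2 + tEdges (s - 1) n) := by
  have hC1 : 1 ≤ s.choose 2 := Nat.choose_pos hs
  have hmulC : (a-1) * s.choose 2 + s.choose 2 = a * s.choose 2 := by
    obtain ⟨b, rfl⟩ : ∃ b, a = b + 1 := ⟨a - 1, by omega⟩
    rw [Nat.add_sub_cancel, Nat.succ_mul]
  have hcardu : (Finset.univ : Finset (Fin n)).card = n := by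
    rw [Finset.card_univ, Fintype.card_fin]
  constructor
  · intro w hw hq
    have h := main_ub s a hs ha w hw hq n hn Finset.univ hcardu
    rw [tEdges_eq_tc]
    exact h
  · refine ⟨fun i j => (a-1) + (if (i:ℕ) % (s-1) = (j:ℕ) % (s-1) then 0 else 1), ?_, ?_, ?_⟩
    · intro i j
      simp only []
      by_cases h : (i:ℕ) % (s-1) = (j:ℕ) % (s-1)
      · rw [if_pos h, if_pos h.symm]
      · rw [if_neg h, if_neg (fun hc => h hc.symm)]
    · intro X hX
      rw [mgS_split n (s-1) (a-1) X, card_pairs X, hX]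
      have hmaps : ∀ x ∈ X, (x:ℕ) % (s-1) ∈ Finset.range (s-1) :=
        fun x _ => Finset.mem_range.mpr (Nat.mod_lt _ (by omega))
      have hlt : (Finset.range (s-1)).card < X.card := by
        rw [Finset.card_range, hX]; omega
      obtain ⟨x, hx, y, hy0, hne, heq⟩ :=
        Finset.exists_ne_map_eq_of_card_lt_of_maps_to hlt hmaps
      set p := if x < y then (x, y) else (y, x) with hpdef
      have hpmem : p ∈ pairs n X := by
        rcases lt_or_gt_of_ne hne with h | h
        · rw [hpdef, if_pos h]
          exact Finset.mem_filter.mpr ⟨Finset.mem_product.mpr ⟨hx, hy0⟩, h⟩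
        · rw [hpdef, if_neg (asymm h)]
          exact Finset.mem_filter.mpr ⟨Finset.mem_product.mpr ⟨hy0, hx⟩, h⟩
      have hpeq : (p.1:ℕ) % (s-1) = (p.2:ℕ) % (s-1) := by
        rcases lt_or_gt_of_ne hne with h | h
        · rw [hpdef, if_pos h]; exact heq
        · rw [hpdef, if_neg (asymm h)]; exact heq.symm
      have hsub : (pairs n X).filter (fun p => ¬ (p.1:ℕ) % (s-1) = (p.2:ℕ) % (s-1))
          ⊆ (pairs n X).erase p := by
        intro z hz
        rw [Finset.mem_filter] at hz
        rw [Finset.mem_erase]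
        exact ⟨fun hc => hz.2 (by rw [hc]; exact hpeq), hz.1⟩
      have hcnt := (Finset.card_le_card hsub).trans_eq (Finset.card_erase_of_mem hpmem)
      rw [card_pairs X, hX] at hcnt
      omega
    · rw [mgS_split n (s-1) (a-1) Finset.univ, card_pairs _, hcardu, card_pairs_filter,
        tEdges_eq_tc]

theorem bondy_tuza_sum (s a n : ℕ) (hs : 2 ≤ s) (ha : 2 ≤ a) (hn : s ≤ n) :
    (∀ w : Fin n → Fin n → ℕ, (∀ i j, w i j = w j i) →
        IsNSQ n s (a * Nat.choose s 2 - 1) w →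
        mgS n w Finset.univ ≤ (a - 1) * Nat.choose n 2 + tEdges (s - 1) n) ∧
    (∃ w : Fin n → Fin n → ℕ, (∀ i j, w i j = w j i) ∧
        IsNSQ n s (a * Nat.choose s 2 - 1) w ∧
        mgS n w Finset.univ = (a - 1) * Nat.choose n 2 + tEdges (s - 1) n) := by
  exact bondy_tuza_sum' s a n hs ha hn
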